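/- (Necessity part of the capacity-region characterization in Proposition 2.) Let G = (V,E) be a finite directed graph, L ≥ 1, and suppose every node i ∈ V runs a queue system over lifetimes {1,…,L} obeying the queue dynamics, nonnegative initial backlogs, and the availability constraint, where for each link (i,j) ∈ E and lifetime l the per-slot flow x_ij^(l)(t) ≥ 0 contributes to xout at node i and to xin at node j. Assume the time averages converge: (1/T) ∑_{t<T} x_ij^(l)(t) → x̄_ij^(l) for all (i,j) ∈ E, l ∈ {1,…,L}, and (1/T) ∑_{t<T} a_i^(l)(t) → λ_i^(l) for all i ∈ V, l ∈ {1,…,L}. Then the limiting flow assignment x̄ satisfies the lifetime-driven generalized flow conservation law: for every node i ∈ V and every lifetime l ∈ {1,…,L}, ∑_{m=l+1}^{L} ∑_{j:(j,i)∈E} x̄_ji^(m) + ∑_{m=l}^{L} λ_i^(m) ≥ ∑_{m=l}^{L} ∑_{j:(i,j)∈E} x̄_ij^(m). -/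

import Mathlib

open Finset Filter Topology

private lemma sum_Icc_bot_split {l L : ℕ} (h : l ≤ L) (f : ℕ → ℝ) :
    ∑ m ∈ Icc l L, f m = f l + ∑ m ∈ Icc (l + 1) L, f m := by
  have : Icc l L = insert l (Icc (l + 1) L) := by
    ext m; simp only [mem_Icc, mem_insert]; omega
  rw [this, Finset.sum_insert (by simp)]

private lemma sum_Icc_shift {l L : ℕ} (f : ℕ → ℝ) :
    ∑ m ∈ Icc l L, f (m + 1) = ∑ m ∈ Icc (l + 1) (L + 1), f m := by
  rw [← Finset.map_add_right_Icc l L 1, Finset.sum_map]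
  rfl

/-- necessity part of Proposition 2: in a finite directed network
where every node runs the lifetime-driven queue dynamics with the availability
constraint, any limiting flow assignment satisfies the lifetime-driven
generalized flow conservation law. -/
theorem stmt3 {V : Type*} [Fintype V] [DecidableEq V]
    (E : Finset (V × V)) (L : ℕ) (hL : 1 ≤ L)
    (Q : ℕ → V → ℕ → ℝ) (a : ℕ → V → ℕ → ℝ) (x : ℕ → V → V → ℕ → ℝ)
    (ha : ∀ t i, ∀ l ∈ Icc 1 L, 0 ≤ a t i l)
    (hx : ∀ t i j, ∀ l ∈ Icc 1 L, 0 ≤ x t i j l)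
    (hQtop : ∀ t i, Q t i (L + 1) = 0)
    (hxtop : ∀ t i j, x t i j (L + 1) = 0)
    (hdyn : ∀ t i, ∀ l ∈ Icc 1 L,
      Q (t + 1) i l = Q t i (l + 1)
        - (∑ j ∈ univ.filter (fun j => (i, j) ∈ E), x t i j (l + 1))
        + (∑ j ∈ univ.filter (fun j => (j, i) ∈ E), x t j i (l + 1))
        + a t i l)
    (havail : ∀ t i, ∀ l ∈ Icc 1 L,
      ∑ j ∈ univ.filter (fun j => (i, j) ∈ E), x t i j l ≤ Q t i l)
    (hinit : ∀ i, ∀ l ∈ Icc 1 L, 0 ≤ Q 0 i l)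
    (xbar : V → V → ℕ → ℝ) (lam : V → ℕ → ℝ)
    (hconvx : ∀ i j, (i, j) ∈ E → ∀ l ∈ Icc 1 L,
      Tendsto (fun T : ℕ => (∑ t ∈ range T, x t i j l) / T) atTop (𝓝 (xbar i j l)))
    (hconva : ∀ i, ∀ l ∈ Icc 1 L,
      Tendsto (fun T : ℕ => (∑ t ∈ range T, a t i l) / T) atTop (𝓝 (lam i l))) :
    ∀ i, ∀ l ∈ Icc 1 L,
      (∑ m ∈ Icc (l + 1) L, ∑ j ∈ univ.filter (fun j => (j, i) ∈ E), xbar j i m)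
          + ∑ m ∈ Icc l L, lam i m
        ≥ ∑ m ∈ Icc l L, ∑ j ∈ univ.filter (fun j => (i, j) ∈ E), xbar i j m := by
  -- nonnegativity of queues at all times
  have hout_le : ∀ t i, ∀ l ∈ Icc 1 L,
      ∑ j ∈ univ.filter (fun j => (i, j) ∈ E), x t i j (l + 1) ≤ Q t i (l + 1) := by
    intro t i l hl
    rcases eq_or_lt_of_le (mem_Icc.mp hl).2 with h | h
    · subst h; rw [hQtop t i]
      exact le_of_eq (Finset.sum_eq_zero fun j _ => hxtop t i j)
    · exact havail t i (l + 1) (mem_Icc.mpr ⟨by omega, by omega⟩)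
  have hin_nonneg : ∀ t i, ∀ l ∈ Icc 1 L,
      0 ≤ ∑ j ∈ univ.filter (fun j => (j, i) ∈ E), x t j i (l + 1) := by
    intro t i l hl
    rcases eq_or_lt_of_le (mem_Icc.mp hl).2 with h | h
    · subst h; exact le_of_eq (Finset.sum_eq_zero fun j _ => hxtop t j i).symm
    · exact Finset.sum_nonneg fun j _ =>
        hx t j i (l + 1) (mem_Icc.mpr ⟨by omega, by omega⟩)
  have hQnn : ∀ t i, ∀ l ∈ Icc 1 L, 0 ≤ Q t i l := by
    intro t i l hl
    cases t with
    | zero => exact hinit i l hl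
    | succ t =>
      rw [hdyn t i l hl]
      have h1 := hout_le t i l hl
      have h2 := hin_nonneg t i l hl
      have h3 := ha t i l hl
      linarith
  intro i l hl
  obtain ⟨h1l, hlL⟩ := mem_Icc.mp hl
  set OUT : ℕ → ℝ := fun t =>
    ∑ m ∈ Icc l L, ∑ j ∈ univ.filter (fun j => (i, j) ∈ E), x t i j m with hOUTdef
  set IN : ℕ → ℝ := fun t =>
    ∑ m ∈ Icc (l + 1) L, ∑ j ∈ univ.filter (fun j => (j, i) ∈ E), x t j i m with hINdef
  set A : ℕ → ℝ := fun t => ∑ m ∈ Icc l L, a t i m with hAdef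
  set S : ℕ → ℝ := fun t => ∑ m ∈ Icc l L, Q t i m with hSdef
  -- per-slot inequality
  have hstep : ∀ t, S (t + 1) + OUT t ≤ S t + IN t + A t := by
    intro t
    have hdyn' : S (t + 1) =
        (∑ m ∈ Icc l L, Q t i (m + 1))
        - (∑ m ∈ Icc l L, ∑ j ∈ univ.filter (fun j => (i, j) ∈ E), x t i j (m + 1))
        + (∑ m ∈ Icc l L, ∑ j ∈ univ.filter (fun j => (j, i) ∈ E), x t j i (m + 1))
        + A t := by
      have hc : S (t + 1) = ∑ m ∈ Icc l L,
          (Q t i (m + 1)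
            - (∑ j ∈ univ.filter (fun j => (i, j) ∈ E), x t i j (m + 1))
            + (∑ j ∈ univ.filter (fun j => (j, i) ∈ E), x t j i (m + 1))
            + a t i m) :=
        Finset.sum_congr rfl fun m hm =>
          hdyn t i m (mem_Icc.mpr ⟨le_trans h1l (mem_Icc.mp hm).1, (mem_Icc.mp hm).2⟩)
      rw [hc]
      simp only [Finset.sum_add_distrib, Finset.sum_sub_distrib]
      rfl
    have e1 : ∑ m ∈ Icc l L, Q t i (m + 1) = S t - Q t i l := by
      rw [sum_Icc_shift (Q t i), Finset.sum_Icc_succ_top (by omega) (Q t i), hQtop t i,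
        hSdef]
      simp only
      rw [sum_Icc_bot_split hlL (Q t i)]
      ring
    have e2 : ∑ m ∈ Icc l L, ∑ j ∈ univ.filter (fun j => (i, j) ∈ E), x t i j (m + 1)
        = OUT t - ∑ j ∈ univ.filter (fun j => (i, j) ∈ E), x t i j l := by
      have hs := sum_Icc_shift (l := l) (L := L)
        (fun m => ∑ j ∈ univ.filter (fun j => (i, j) ∈ E), x t i j m)
      rw [hs, Finset.sum_Icc_succ_top (by omega), hOUTdef]
      simp only
      rw [sum_Icc_bot_split hlL]
      have : ∑ j ∈ univ.filter (fun j => (i, j) ∈ E), x t i j (L + 1) = 0 :=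
        Finset.sum_eq_zero fun j _ => hxtop t i j
      rw [this]; ring
    have e3 : ∑ m ∈ Icc l L, ∑ j ∈ univ.filter (fun j => (j, i) ∈ E), x t j i (m + 1)
        = IN t := by
      have hs := sum_Icc_shift (l := l) (L := L)
        (fun m => ∑ j ∈ univ.filter (fun j => (j, i) ∈ E), x t j i m)
      rw [hs, Finset.sum_Icc_succ_top (by omega), hINdef]
      have : ∑ j ∈ univ.filter (fun j => (j, i) ∈ E), x t j i (L + 1) = 0 :=
        Finset.sum_eq_zero fun j _ => hxtop t j i
      simp only
      rw [this]; ring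
    have hav := havail t i l hl
    rw [hdyn', e1, e2, e3]
    linarith
  -- telescoping
  have htel : ∀ T, S T + ∑ t ∈ range T, OUT t ≤ S 0 + ∑ t ∈ range T, (IN t + A t) := by
    intro T
    induction T with
    | zero => simp
    | succ T ih =>
      rw [Finset.sum_range_succ, Finset.sum_range_succ]
      have := hstep T
      linarith
  have hSnn : ∀ T, 0 ≤ S T := fun T =>
    Finset.sum_nonneg fun m hm =>
      hQnn T i m (mem_Icc.mpr ⟨le_trans h1l (mem_Icc.mp hm).1, (mem_Icc.mp hm).2⟩)
  have hbound : ∀ T, ∑ t ∈ range T, OUT t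
      ≤ S 0 + ((∑ t ∈ range T, IN t) + (∑ t ∈ range T, A t)) := by
    intro T
    have := htel T
    have := hSnn T
    rw [Finset.sum_add_distrib] at *
    linarith
  -- limits
  have hmemL : ∀ m ∈ Icc l L, m ∈ Icc 1 L := fun m hm =>
    mem_Icc.mpr ⟨le_trans h1l (mem_Icc.mp hm).1, (mem_Icc.mp hm).2⟩
  have hmemL' : ∀ m ∈ Icc (l + 1) L, m ∈ Icc 1 L := fun m hm =>
    mem_Icc.mpr ⟨by have := (mem_Icc.mp hm).1; omega, (mem_Icc.mp hm).2⟩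
  have hOUTlim : Tendsto (fun T : ℕ => (∑ t ∈ range T, OUT t) / T) atTop
      (𝓝 (∑ m ∈ Icc l L, ∑ j ∈ univ.filter (fun j => (i, j) ∈ E), xbar i j m)) := by
    have : ∀ T : ℕ, (∑ t ∈ range T, OUT t) / T
        = ∑ m ∈ Icc l L, ∑ j ∈ univ.filter (fun j => (i, j) ∈ E),
            (∑ t ∈ range T, x t i j m) / T := by
      intro T
      rw [hOUTdef]
      simp only
      rw [Finset.sum_comm, Finset.sum_div]
      refine Finset.sum_congr rfl fun m _ => ?_
      rw [Finset.sum_comm, Finset.sum_div]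
    simp only [this]
    exact tendsto_finset_sum _ fun m hm => tendsto_finset_sum _ fun j hj =>
      hconvx i j (by simpa using hj) m (hmemL m hm)
  have hINlim : Tendsto (fun T : ℕ => (∑ t ∈ range T, IN t) / T) atTop
      (𝓝 (∑ m ∈ Icc (l + 1) L, ∑ j ∈ univ.filter (fun j => (j, i) ∈ E), xbar j i m)) := by
    have : ∀ T : ℕ, (∑ t ∈ range T, IN t) / T
        = ∑ m ∈ Icc (l + 1) L, ∑ j ∈ univ.filter (fun j => (j, i) ∈ E),
            (∑ t ∈ range T, x t j i m) / T := by
      intro T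
      rw [hINdef]
      simp only
      rw [Finset.sum_comm, Finset.sum_div]
      refine Finset.sum_congr rfl fun m _ => ?_
      rw [Finset.sum_comm, Finset.sum_div]
    simp only [this]
    exact tendsto_finset_sum _ fun m hm => tendsto_finset_sum _ fun j hj =>
      hconvx j i (by simpa using hj) m (hmemL' m hm)
  have hAlim : Tendsto (fun T : ℕ => (∑ t ∈ range T, A t) / T) atTop
      (𝓝 (∑ m ∈ Icc l L, lam i m)) := by
    have : ∀ T : ℕ, (∑ t ∈ range T, A t) / T
        = ∑ m ∈ Icc l L, (∑ t ∈ range T, a t i m) / T := by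
      intro T
      rw [hAdef]
      simp only
      rw [Finset.sum_comm, Finset.sum_div]
    simp only [this]
    exact tendsto_finset_sum _ fun m hm => hconva i m (hmemL m hm)
  have hRHSlim : Tendsto (fun T : ℕ =>
      (S 0 + ((∑ t ∈ range T, IN t) + (∑ t ∈ range T, A t))) / T) atTop
      (𝓝 (0 + ((∑ m ∈ Icc (l + 1) L, ∑ j ∈ univ.filter (fun j => (j, i) ∈ E), xbar j i m)
        + ∑ m ∈ Icc l L, lam i m))) := by
    simp only [add_div]
    exact (tendsto_const_div_atTop_nhds_zero_nat (S 0)).add (hINlim.add hAlim)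
  have key := le_of_tendsto_of_tendsto' hOUTlim hRHSlim (fun T => by
    rcases Nat.eq_zero_or_pos T with h | h
    · simp [h]
    · have hT : (0 : ℝ) < T := by exact_mod_cast h
      exact div_le_div_of_nonneg_right (hbound T) hT.le)
  rw [zero_add] at key
  exact key
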